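/- For every graph G of order n, μₙ(G)² + μₙ(Ḡ)² ≤ (3/8)·n², where μₙ denotes the smallest adjacency eigenvalue. -/

import Mathlib

open Matrix SimpleGraph

section Auxiliary

lemma count_lemma {n : ℕ} (c : Fin n → Bool × Bool) :
    ((Finset.univ.filter fun p : Fin n × Fin n => c p.1 ≠ c p.2).card : ℝ) ≤ 3 / 4 * n ^ 2 := by
  classical
  set s := Finset.univ.filter fun p : Fin n × Fin n => c p.1 = c p.2 with hs
  set d := Finset.univ.filter fun p : Fin n × Fin n => ¬ c p.1 = c p.2 with hd
  have hsplit : s.card + d.card = n * n := by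
    rw [hs, hd, Finset.card_filter_add_card_filter_not]
    simp
  have hfib : ∀ i j : Fin n,
      (∑ k : Bool × Bool, (if c i = k then 1 else 0) * (if c j = k then (1:ℕ) else 0))
        = if c i = c j then 1 else 0 := by
    intro i j
    rw [Finset.sum_eq_single (c i)]
    · simp [eq_comm]
    · intro b _ hb; simp [Ne.symm hb]
    · simp
  have hscard : s.card = ∑ k : Bool × Bool, (Finset.univ.filter fun i => c i = k).card ^ 2 := by
    have e1 : ∀ k : Bool × Bool, (Finset.univ.filter fun i => c i = k).card ^ 2
        = ∑ i : Fin n, ∑ j : Fin n, (if c i = k then 1 else 0) * (if c j = k then (1:ℕ) else 0) := by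
      intro k
      rw [Finset.card_filter, sq, Finset.sum_mul_sum]
    have e2 : (∑ k : Bool × Bool, ∑ i : Fin n, ∑ j : Fin n,
          (if c i = k then 1 else 0) * (if c j = k then (1:ℕ) else 0))
        = ∑ i : Fin n, ∑ j : Fin n, ∑ k : Bool × Bool,
          (if c i = k then 1 else 0) * (if c j = k then (1:ℕ) else 0) := by
      rw [Finset.sum_comm]
      exact Finset.sum_congr rfl fun i _ => Finset.sum_comm
    rw [Finset.sum_congr rfl fun k _ => e1 k, e2, hs, Finset.card_filter,
      Fintype.sum_prod_type]
    exact Finset.sum_congr rfl fun i _ => Finset.sum_congr rfl fun j _ => (hfib i j).symm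
  have hn : ∑ k : Bool × Bool, (Finset.univ.filter fun i => c i = k).card = n := by
    rw [← Finset.card_eq_sum_card_fiberwise (fun i _ => Finset.mem_univ (c i))]
    simp
  have hcheb : (n : ℕ) ^ 2 ≤ 4 * s.card := by
    have := sq_sum_le_card_mul_sum_sq (s := (Finset.univ : Finset (Bool × Bool)))
      (f := fun k => ((Finset.univ.filter fun i => c i = k).card : ℕ))
    rw [hn] at this
    simpa [hscard] using this
  have h1 : (s.card : ℝ) + d.card = (n : ℝ) ^ 2 := by
    have := congrArg (Nat.cast (R := ℝ)) hsplit
    push_cast at this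
    linarith [this]
  have h2 : (n : ℝ) ^ 2 ≤ 4 * s.card := by exact_mod_cast hcheb
  linarith

lemma aux_min {n : ℕ} (hn : 0 < n) {A : Matrix (Fin n) (Fin n) ℝ} (hA : A.IsHermitian)
    (htr : A.trace = 0) :
    ∃ x : Fin n → ℝ, (∑ i, x i ^ 2 = 1) ∧
      A *ᵥ x = hA.eigenvalues (Tuple.sort hA.eigenvalues (Fin.rev ⟨n - 1, Nat.pred_lt_self hn⟩)) • x ∧
      hA.eigenvalues (Tuple.sort hA.eigenvalues (Fin.rev ⟨n - 1, Nat.pred_lt_self hn⟩)) ≤ 0 := by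
  classical
  set σ := Tuple.sort hA.eigenvalues with hσ
  set j : Fin n := σ (Fin.rev ⟨n - 1, by omega⟩) with hj
  set μ : ℝ := hA.eigenvalues j with hμ
  refine ⟨⇑(hA.eigenvectorBasis j), ?_, hA.mulVec_eigenvectorBasis j, ?_⟩
  · have hnorm : ‖hA.eigenvectorBasis j‖ = 1 := hA.eigenvectorBasis.orthonormal.1 j
    have := EuclideanSpace.norm_eq (hA.eigenvectorBasis j)
    rw [hnorm] at this
    have h2 : Real.sqrt (∑ i, ‖hA.eigenvectorBasis j i‖ ^ 2) = 1 := this.symm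
    have h3 : (∑ i, ‖hA.eigenvectorBasis j i‖ ^ 2) = 1 := by
      have hnn : 0 ≤ ∑ i, ‖hA.eigenvectorBasis j i‖ ^ 2 :=
        Finset.sum_nonneg fun i _ => sq_nonneg _
      nlinarith [Real.sq_sqrt hnn]
    simpa [Real.norm_eq_abs, sq_abs] using h3
  · -- μ is the min eigenvalue
    have hmin : ∀ k : Fin n, μ ≤ hA.eigenvalues k := by
      intro k
      have hk : k = σ (σ.symm k) := (Equiv.apply_symm_apply σ k).symm
      have hle : Fin.rev ⟨n - 1, by omega⟩ ≤ σ.symm k := by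
        rw [Fin.le_def]
        simp [Fin.rev]
        omega
      have := Tuple.monotone_sort hA.eigenvalues hle
      rw [hk]
      exact this
    -- trace = sum of eigenvalues
    have htr2 : ∑ k, hA.eigenvalues k = 0 := by
      have hspec := hA.spectral_theorem
      have hU : (star (hA.eigenvectorUnitary : Matrix (Fin n) (Fin n) ℝ)) *
          (hA.eigenvectorUnitary : Matrix (Fin n) (Fin n) ℝ) = 1 :=
        Matrix.mem_unitaryGroup_iff'.mp hA.eigenvectorUnitary.2
      have : A.trace = (Matrix.diagonal (RCLike.ofReal ∘ hA.eigenvalues) :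
          Matrix (Fin n) (Fin n) ℝ).trace := by
        conv_lhs => rw [hspec]
        rw [Unitary.conjStarAlgAut_apply, Matrix.trace_mul_comm, ← Matrix.mul_assoc, hU, Matrix.one_mul]
      rw [htr, Matrix.trace_diagonal] at this
      simpa using this.symm
    by_contra hpos
    push_neg at hpos
    have : (n : ℝ) * μ ≤ ∑ k, hA.eigenvalues k := by
      calc (n : ℝ) * μ = ∑ _k : Fin n, μ := by simp [mul_comm]
        _ ≤ ∑ k, hA.eigenvalues k := Finset.sum_le_sum fun k _ => hmin k
    rw [htr2] at this
    have : (n : ℝ) * μ > 0 := by positivity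
    linarith

lemma cut_bound {n : ℕ} (G : SimpleGraph (Fin n)) [DecidableRel G.Adj] (x : Fin n → ℝ)
    (hx : ∑ i, x i ^ 2 = 1) (μ : ℝ) (hμ0 : μ ≤ 0) (heig : G.adjMatrix ℝ *ᵥ x = μ • x) :
    μ ^ 2 ≤ (1 / 2 : ℝ) * (Finset.univ.filter fun p : Fin n × Fin n =>
      G.Adj p.1 p.2 ∧ ¬((0 ≤ x p.1) ↔ (0 ≤ x p.2))).card := by
  classical
  set A := G.adjMatrix ℝ with hA
  -- μ as quadratic form
  have hμsum : μ = ∑ p : Fin n × Fin n, A p.1 p.2 * (x p.1 * x p.2) := by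
    have h1 : ∀ i, (A *ᵥ x) i = μ * x i := by
      intro i; rw [heig]; simp
    have h2 : μ = ∑ i, x i * (A *ᵥ x) i := by
      simp_rw [h1]
      have : ∑ i, x i * (μ * x i) = μ * ∑ i, x i ^ 2 := by
        rw [Finset.mul_sum]; exact Finset.sum_congr rfl fun i _ => by ring
      rw [this, hx, mul_one]
    rw [h2, Fintype.sum_prod_type]
    refine Finset.sum_congr rfl fun i _ => ?_
    rw [Matrix.mulVec, dotProduct, Finset.mul_sum]
    exact Finset.sum_congr rfl fun j _ => by ring
  set C := Finset.univ.filter fun p : Fin n × Fin n =>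
      G.Adj p.1 p.2 ∧ ¬((0 ≤ x p.1) ↔ (0 ≤ x p.2)) with hC
  set S := ∑ p ∈ C, x p.1 * x p.2 with hS
  -- S ≤ μ
  have hsplit := Finset.sum_filter_add_sum_filter_not Finset.univ
    (fun p : Fin n × Fin n => G.Adj p.1 p.2 ∧ ¬((0 ≤ x p.1) ↔ (0 ≤ x p.2)))
    (fun p => A p.1 p.2 * (x p.1 * x p.2))
  have hCsum : ∑ p ∈ C, A p.1 p.2 * (x p.1 * x p.2) = S := by
    refine Finset.sum_congr rfl fun p hp => ?_
    rw [hC, Finset.mem_filter] at hp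
    rw [hA, SimpleGraph.adjMatrix_apply, if_pos hp.2.1, one_mul]
  have hrest : 0 ≤ ∑ p ∈ Finset.univ.filter (fun p : Fin n × Fin n =>
      ¬(G.Adj p.1 p.2 ∧ ¬((0 ≤ x p.1) ↔ (0 ≤ x p.2)))), A p.1 p.2 * (x p.1 * x p.2) := by
    refine Finset.sum_nonneg fun p hp => ?_
    rw [Finset.mem_filter] at hp
    by_cases hadj : G.Adj p.1 p.2
    · have hiff : (0 ≤ x p.1) ↔ (0 ≤ x p.2) := by tauto
      rw [hA, SimpleGraph.adjMatrix_apply, if_pos hadj, one_mul]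
      rcases le_or_gt 0 (x p.1) with h1 | h1
      · exact mul_nonneg h1 (hiff.mp h1)
      · have h2 : x p.2 < 0 := by
          by_contra h2; push_neg at h2; exact absurd (hiff.mpr h2) (not_le.mpr h1)
        exact le_of_lt (mul_pos_of_neg_of_neg h1 h2)
    · rw [hA, SimpleGraph.adjMatrix_apply, if_neg hadj, zero_mul]
  have hSμ : S ≤ μ := by
    rw [hμsum, ← hsplit, hCsum]
    linarith
  -- each term of S is ≤ 0, so S ≤ 0; μ² ≤ S²
  have hμ2 : μ ^ 2 ≤ S ^ 2 := by nlinarith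
  -- Cauchy-Schwarz
  have hCS : S ^ 2 ≤ C.card * ∑ p ∈ C, (x p.1 * x p.2) ^ 2 :=
    sq_sum_le_card_mul_sum_sq
  -- bound the sum of squares
  set D := Finset.univ.filter fun p : Fin n × Fin n => ¬((0 ≤ x p.1) ↔ (0 ≤ x p.2)) with hD
  have hCD : C ⊆ D := by
    intro p hp
    rw [hC, Finset.mem_filter] at hp
    rw [hD, Finset.mem_filter]
    exact ⟨hp.1, hp.2.2⟩
  have hsub : ∑ p ∈ C, (x p.1 * x p.2) ^ 2 ≤ ∑ p ∈ D, (x p.1 * x p.2) ^ 2 :=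
    Finset.sum_le_sum_of_subset_of_nonneg hCD fun p _ _ => sq_nonneg _
  set P := Finset.univ.filter fun i => 0 ≤ x i with hP
  set N := Finset.univ.filter fun i => ¬ 0 ≤ x i with hN
  have hDU : D = P ×ˢ N ∪ N ×ˢ P := by
    ext p
    simp only [hD, hP, hN, Finset.mem_filter, Finset.mem_union, Finset.mem_product,
      Finset.mem_univ, true_and]
    tauto
  have hdisj : Disjoint (P ×ˢ N) (N ×ˢ P) := by
    rw [Finset.disjoint_left]
    intro p hp hq
    rw [Finset.mem_product] at hp hq
    rw [hP, hN, Finset.mem_filter] at *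
    exact hq.1.2 hp.1.2
  have hprodsum : ∀ (s t : Finset (Fin n)),
      ∑ p ∈ s ×ˢ t, (x p.1 * x p.2) ^ 2 = (∑ i ∈ s, x i ^ 2) * (∑ i ∈ t, x i ^ 2) := by
    intro s t
    rw [Finset.sum_mul_sum, Finset.sum_product]
    exact Finset.sum_congr rfl fun i _ => Finset.sum_congr rfl fun j _ => by ring
  have hab : (∑ i ∈ P, x i ^ 2) + (∑ i ∈ N, x i ^ 2) = 1 := by
    rw [hP, hN, Finset.sum_filter_add_sum_filter_not, hx]
  have haN : 0 ≤ ∑ i ∈ N, x i ^ 2 := Finset.sum_nonneg fun i _ => sq_nonneg _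
  have haP : 0 ≤ ∑ i ∈ P, x i ^ 2 := Finset.sum_nonneg fun i _ => sq_nonneg _
  have hDval : ∑ p ∈ D, (x p.1 * x p.2) ^ 2 ≤ 1 / 2 := by
    rw [hDU, Finset.sum_union hdisj, hprodsum, hprodsum]
    nlinarith [sq_nonneg ((∑ i ∈ P, x i ^ 2) - ∑ i ∈ N, x i ^ 2)]
  calc μ ^ 2 ≤ S ^ 2 := hμ2
    _ ≤ C.card * ∑ p ∈ C, (x p.1 * x p.2) ^ 2 := hCS
    _ ≤ C.card * (1 / 2) := by
        have := le_trans hsub hDval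
        exact mul_le_mul_of_nonneg_left this (by positivity)
    _ = (1 / 2 : ℝ) * C.card := by ring

end Auxiliary

/-- The eigenvalues of the adjacency matrix of `G`, in descending order:
`graphEig G i` is the `(i+1)`-th largest eigenvalue. -/
noncomputable def graphEig {n : ℕ} (G : SimpleGraph (Fin n)) (i : Fin n) : ℝ :=
  letI := Classical.decRel G.Adj
  letI hH : (G.adjMatrix ℝ).IsHermitian := by rw [Matrix.IsHermitian, conjTranspose_eq_transpose_of_trivial]; exact G.isSymm_adjMatrix
  hH.eigenvalues (Tuple.sort hH.eigenvalues i.rev)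

theorem stmt11 (n : ℕ) (hn : 0 < n) (G : SimpleGraph (Fin n)) :
    graphEig G ⟨n - 1, by omega⟩ ^ 2 + graphEig Gᶜ ⟨n - 1, by omega⟩ ^ 2 ≤
      3 / 8 * (n : ℝ) ^ 2 := by
  classical
  letI instG := Classical.decRel G.Adj
  letI instGc := Classical.decRel Gᶜ.Adj
  have hH : (G.adjMatrix ℝ).IsHermitian := by
    rw [Matrix.IsHermitian, conjTranspose_eq_transpose_of_trivial]
    exact G.isSymm_adjMatrix
  have hHc : (Gᶜ.adjMatrix ℝ).IsHermitian := by
    rw [Matrix.IsHermitian, conjTranspose_eq_transpose_of_trivial]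
    exact Gᶜ.isSymm_adjMatrix
  have e1 : graphEig G ⟨n - 1, by omega⟩ =
      hH.eigenvalues (Tuple.sort hH.eigenvalues (Fin.rev ⟨n - 1, by omega⟩)) := rfl
  have e2 : graphEig Gᶜ ⟨n - 1, by omega⟩ =
      hHc.eigenvalues (Tuple.sort hHc.eigenvalues (Fin.rev ⟨n - 1, by omega⟩)) := rfl
  obtain ⟨x, hx1, hx2, hx3⟩ := aux_min hn hH (SimpleGraph.trace_adjMatrix ℝ _)
  obtain ⟨y, hy1, hy2, hy3⟩ := aux_min hn hHc (SimpleGraph.trace_adjMatrix ℝ _)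
  rw [e1, e2]
  set μ := hH.eigenvalues (Tuple.sort hH.eigenvalues (Fin.rev ⟨n - 1, by omega⟩)) with hμdef
  set ν := hHc.eigenvalues (Tuple.sort hHc.eigenvalues (Fin.rev ⟨n - 1, by omega⟩)) with hνdef
  have hb1 := cut_bound G x hx1 μ hx3 hx2
  have hb2 := cut_bound Gᶜ y hy1 ν hy3 hy2
  set CG := Finset.univ.filter fun p : Fin n × Fin n =>
      G.Adj p.1 p.2 ∧ ¬((0 ≤ x p.1) ↔ (0 ≤ x p.2)) with hCG
  set CGc := Finset.univ.filter fun p : Fin n × Fin n =>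
      Gᶜ.Adj p.1 p.2 ∧ ¬((0 ≤ y p.1) ↔ (0 ≤ y p.2)) with hCGc
  set c : Fin n → Bool × Bool := fun i => (decide (0 ≤ x i), decide (0 ≤ y i)) with hc
  set Dd := Finset.univ.filter fun p : Fin n × Fin n => c p.1 ≠ c p.2 with hDd
  have hdisj : Disjoint CG CGc := by
    rw [Finset.disjoint_left]
    intro p hp hq
    rw [hCG, Finset.mem_filter] at hp
    rw [hCGc, Finset.mem_filter] at hq
    exact (hq.2.1.2) hp.2.1
  have hsub : CG ∪ CGc ⊆ Dd := by
    intro p hp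
    rw [Finset.mem_union] at hp
    rw [hDd, Finset.mem_filter]
    refine ⟨Finset.mem_univ _, ?_⟩
    rcases hp with hp | hp
    · rw [hCG, Finset.mem_filter] at hp
      intro hcc
      rw [hc] at hcc
      have := congrArg Prod.fst hcc
      simp only [decide_eq_decide] at this
      exact hp.2.2 this
    · rw [hCGc, Finset.mem_filter] at hp
      intro hcc
      rw [hc] at hcc
      have := congrArg Prod.snd hcc
      simp only [decide_eq_decide] at this
      exact hp.2.2 this
  have hcard : (CG.card : ℝ) + CGc.card ≤ Dd.card := by
    have h1 : CG.card + CGc.card = (CG ∪ CGc).card :=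
      (Finset.card_union_of_disjoint hdisj).symm
    have h2 : (CG ∪ CGc).card ≤ Dd.card := Finset.card_le_card hsub
    exact_mod_cast h1 ▸ (Nat.cast_le.mpr h2)
  have hcount := count_lemma c
  calc μ ^ 2 + ν ^ 2 ≤ (1 / 2 : ℝ) * CG.card + (1 / 2 : ℝ) * CGc.card := by linarith
    _ ≤ (1 / 2 : ℝ) * Dd.card := by linarith
    _ ≤ (1 / 2 : ℝ) * (3 / 4 * n ^ 2) := by linarith
    _ = 3 / 8 * (n : ℝ) ^ 2 := by ring
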